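/- For all integers ℓ ≥ 9 and a with 0 < a < ℓ/2 and gcd(a,ℓ) = 1, there exist x₁, x₂, x₃ ∈ Sym(ℓ) such that x₁·x₂·x₃ = 1, the subgroup generated by x₁, x₂, x₃ contains Alt(ℓ), the cyclic group generated by x₁ has exactly two orbits on {1,…,ℓ}, of sizes a and ℓ−a, the same holds for x₂, and x₃ is a 3-cycle. -/

import Mathlib

/-- The cyclic group generated by the permutation `x` has exactly two orbits, of
cardinalities `a` and `b`. -/
def HasTwoOrbitsOfSizes {α : Type*} (x : Equiv.Perm α) (a b : ℕ) : Prop :=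
  ∃ ω₁ ω₂ : MulAction.orbitRel.Quotient (Subgroup.zpowers x) α,
    ω₁ ≠ ω₂ ∧ (∀ ω, ω = ω₁ ∨ ω = ω₂) ∧
    Nat.card ω₁.orbit = a ∧ Nat.card ω₂.orbit = b

open Equiv Equiv.Perm Subgroup


section Cyc3

variable {α : Type*} [DecidableEq α] [Fintype α]

/-- The 3-cycle sending `x → y → z → x`. -/
def cyc3 (x y z : α) : Equiv.Perm α := Equiv.swap x y * Equiv.swap y z

lemma cyc3_fst {x y z : α} (hxy : x ≠ y) (hxz : x ≠ z) : cyc3 x y z x = y := by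
  simp [cyc3, Equiv.swap_apply_of_ne_of_ne hxy hxz]

lemma cyc3_snd {x y z : α} (hxz : x ≠ z) (hyz : y ≠ z) : cyc3 x y z y = z := by
  simp [cyc3, Equiv.swap_apply_of_ne_of_ne hxz.symm hyz.symm]

lemma cyc3_thd (x y z : α) : cyc3 x y z z = x := by
  simp [cyc3]

lemma cyc3_other {x y z v : α} (hx : v ≠ x) (hy : v ≠ y) (hz : v ≠ z) :
    cyc3 x y z v = v := by
  simp [cyc3, Equiv.swap_apply_of_ne_of_ne hy hz, Equiv.swap_apply_of_ne_of_ne hx hy]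

lemma cyc3_isThreeCycle {x y z : α} (hxy : x ≠ y) (hxz : x ≠ z) (hyz : y ≠ z) :
    IsThreeCycle (cyc3 x y z) := by
  have : cyc3 x y z = Equiv.swap y x * Equiv.swap y z := by rw [cyc3, Equiv.swap_comm]
  rw [this]
  exact isThreeCycle_swap_mul_swap_same hxy.symm hyz hxz

/-- Case bash: two 3-cycles are equal if they agree as functions on the obvious points. -/
lemma cyc3_ext_aux {x y z : α} (hxy : x ≠ y) (hxz : x ≠ z) (hyz : y ≠ z)
    (f : Perm α)
    (h1 : f x = y) (h2 : f y = z) (h3 : f z = x)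
    (h4 : ∀ v, v ≠ x → v ≠ y → v ≠ z → f v = v) :
    f = cyc3 x y z := by
  ext v
  rcases eq_or_ne v x with rfl | hvx
  · rw [h1, cyc3_fst hxy hxz]
  rcases eq_or_ne v y with rfl | hvy
  · rw [h2, cyc3_snd hxz hyz]
  rcases eq_or_ne v z with rfl | hvz
  · rw [h3, cyc3_thd]
  · rw [h4 v hvx hvy hvz, cyc3_other hvx hvy hvz]

lemma cyc3_rot {x y z : α} (hxy : x ≠ y) (hxz : x ≠ z) (hyz : y ≠ z) :
    cyc3 x y z = cyc3 y z x := by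
  refine cyc3_ext_aux hyz hxy.symm hxz.symm _ (cyc3_snd hxz hyz) (cyc3_thd x y z)
    (cyc3_fst hxy hxz) ?_
  exact fun v hy hz hx => cyc3_other hx hy hz

lemma cyc3_inv {x y z : α} (hxy : x ≠ y) (hxz : x ≠ z) (hyz : y ≠ z) :
    (cyc3 x y z)⁻¹ = cyc3 x z y := by
  refine cyc3_ext_aux hxz hxy hyz.symm _ ?_ ?_ ?_ ?_
  · rw [Equiv.Perm.inv_eq_iff_eq, cyc3_thd]
  · rw [Equiv.Perm.inv_eq_iff_eq, cyc3_snd hxz hyz]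
  · rw [Equiv.Perm.inv_eq_iff_eq, cyc3_fst hxy hxz]
  · intro v hx hz hy
    rw [Equiv.Perm.inv_eq_iff_eq, cyc3_other hx hy hz]

lemma cyc3_conj (g : Perm α) (x y z : α) :
    g * cyc3 x y z * g⁻¹ = cyc3 (g x) (g y) (g z) := by
  rw [cyc3, cyc3, Equiv.swap_apply_apply g x y, Equiv.swap_apply_apply g y z]
  group

/-- `(x q r) * (x p q) = (x p r)`. -/
lemma cyc3_comb {x p q r : α} (hxp : x ≠ p) (hxq : x ≠ q) (hxr : x ≠ r)
    (hpq : p ≠ q) (hpr : p ≠ r) (hqr : q ≠ r) :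
    cyc3 x q r * cyc3 x p q = cyc3 x p r := by
  refine cyc3_ext_aux hxp hxr hpr _ ?_ ?_ ?_ ?_
  · rw [Perm.mul_apply, cyc3_fst hxp hxq, cyc3_other hxp.symm hpq hpr]
  · rw [Perm.mul_apply, cyc3_snd hxq hpq, cyc3_snd hxr hqr]
  · rw [Perm.mul_apply, cyc3_other hxr.symm hpr.symm hqr.symm, cyc3_thd]
  · intro v hvx hvp hvr
    rcases eq_or_ne v q with rfl | hvq
    · rw [Perm.mul_apply, cyc3_thd, cyc3_fst hxq hxr]
    · rw [Perm.mul_apply, cyc3_other hvx hvp hvq, cyc3_other hvx hvq hvr]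

/-- `(r q p) * (x p q) = (x r q)`. -/
lemma cyc3_comb' {x p q r : α} (hxp : x ≠ p) (hxq : x ≠ q) (hxr : x ≠ r)
    (hpq : p ≠ q) (hpr : p ≠ r) (hqr : q ≠ r) :
    cyc3 r q p * cyc3 x p q = cyc3 x r q := by
  refine cyc3_ext_aux hxr hxq hqr.symm _ ?_ ?_ ?_ ?_
  · rw [Perm.mul_apply, cyc3_fst hxp hxq, cyc3_thd]
  · rw [Perm.mul_apply, cyc3_other hxr.symm hpr.symm hqr.symm, cyc3_fst hqr.symm hpr.symm]
  · rw [Perm.mul_apply, cyc3_thd, cyc3_other hxr hxq hxp]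
  · intro v hvx hvr hvq
    rcases eq_or_ne v p with rfl | hvp
    · rw [Perm.mul_apply, cyc3_snd hxq hpq, cyc3_snd hpr.symm hpq.symm]
    · rw [Perm.mul_apply, cyc3_other hvx hvp hvq, cyc3_other hvr hvq hvp]

/-- `(a x y) * (a y z) = (x y z)`. -/
lemma cyc3_split {a x y z : α} (hax : a ≠ x) (hay : a ≠ y) (haz : a ≠ z)
    (hxy : x ≠ y) (hxz : x ≠ z) (hyz : y ≠ z) :
    cyc3 a x y * cyc3 a y z = cyc3 x y z := by
  refine cyc3_ext_aux hxy hxz hyz _ ?_ ?_ ?_ ?_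
  · rw [Perm.mul_apply, cyc3_other hax.symm hxy hxz, cyc3_snd hay hxy]
  · rw [Perm.mul_apply, cyc3_snd haz hyz, cyc3_other haz.symm hxz.symm hyz.symm]
  · rw [Perm.mul_apply, cyc3_thd, cyc3_fst hax hay]
  · intro v hvx hvy hvz
    rcases eq_or_ne v a with rfl | hva
    · rw [Perm.mul_apply, cyc3_fst hay haz, cyc3_thd]
    · rw [Perm.mul_apply, cyc3_other hva hvy hvz, cyc3_other hva hvx hvy]

/-- Every abstract 3-cycle is a `cyc3`. -/
lemma IsThreeCycle.eq_cyc3 {σ : Perm α} (h : IsThreeCycle σ) :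
    ∃ x y z : α, x ≠ y ∧ x ≠ z ∧ y ≠ z ∧ σ = cyc3 x y z := by
  obtain ⟨x, hx, -⟩ := h.isCycle
  have h3 : σ ^ 3 = 1 := by rw [← h.orderOf]; exact pow_orderOf_eq_one σ
  have hz : σ (σ (σ x)) = x := by
    have := Equiv.ext_iff.1 h3 x
    simpa [pow_succ, Perm.mul_apply] using this
  have hxy : x ≠ σ x := hx.symm
  have hyz : σ x ≠ σ (σ x) := by
    intro hyz
    have hs : σ x ∈ σ.support := Equiv.Perm.apply_mem_support.2 (Equiv.Perm.mem_support.2 hx)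
    exact (Equiv.Perm.mem_support.1 hs) hyz.symm
  have hxz : x ≠ σ (σ x) := by
    intro hzx
    apply hx
    rw [← hzx] at hz
    nth_rewrite 2 [← hz]
    rw [hzx]
  refine ⟨x, σ x, σ (σ x), hxy, hxz, hyz, ?_⟩
  refine cyc3_ext_aux hxy hxz hyz σ rfl rfl hz ?_
  intro v hvx hvy hvz
  have hsub : ({x, σ x, σ (σ x)} : Finset α) ⊆ σ.support := by
    intro w hw
    simp only [Finset.mem_insert, Finset.mem_singleton] at hw
    rcases hw with rfl | rfl | rfl
    · exact Equiv.Perm.mem_support.2 hx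
    · exact Equiv.Perm.apply_mem_support.2 (Equiv.Perm.mem_support.2 hx)
    · exact Equiv.Perm.apply_mem_support.2
        (Equiv.Perm.apply_mem_support.2 (Equiv.Perm.mem_support.2 hx))
  have hcard : σ.support.card ≤ ({x, σ x, σ (σ x)} : Finset α).card := by
    rw [h.card_support, Finset.card_insert_of_notMem (by simp [hxy, hxz]),
      Finset.card_insert_of_notMem (by simp [hyz]), Finset.card_singleton]
  have hsupp : σ.support = {x, σ x, σ (σ x)} :=
    (Finset.eq_of_subset_of_card_le hsub hcard).symm
  have hv : v ∉ σ.support := by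
    rw [hsupp]
    simp [hvx, hvy, hvz]
  exact Equiv.Perm.notMem_support.1 hv

end Cyc3

section Generation

variable {α : Type*} [DecidableEq α] [Fintype α]

/-- If a subgroup contains all 3-cycles `(a b k)`, it contains the alternating group. -/
lemma alt_le_of_cyc3_mem (G : Subgroup (Equiv.Perm α)) (a b : α) (hab : a ≠ b)
    (H : ∀ k, k ≠ a → k ≠ b → cyc3 a b k ∈ G) :
    alternatingGroup α ≤ G := by
  have H1 : ∀ u v : α, u ≠ v → u ≠ a → v ≠ a → cyc3 a u v ∈ G := by
    intro u v huv hua hva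
    rcases eq_or_ne u b with rfl | hub
    · exact H v hva huv.symm
    rcases eq_or_ne v b with rfl | hvb
    · have : (cyc3 a v u)⁻¹ = cyc3 a u v := cyc3_inv hab hua.symm hub.symm
      rw [← this]
      exact G.inv_mem (H u hua hub)
    · have hau : a ≠ u := hua.symm
      have hav : a ≠ v := hva.symm
      have hbv : b ≠ v := hvb.symm
      have g1 : (cyc3 a b u)⁻¹ a = u := by rw [Equiv.Perm.inv_eq_iff_eq, cyc3_thd]
      have g2 : (cyc3 a b u)⁻¹ v = v := by
        rw [Equiv.Perm.inv_eq_iff_eq, cyc3_other hva hvb huv.symm]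
      have g3 : (cyc3 a b u)⁻¹ b = a := by
        rw [Equiv.Perm.inv_eq_iff_eq, cyc3_fst hab hau]
      have hconj := cyc3_conj (cyc3 a b u)⁻¹ a v b
      rw [inv_inv, g1, g2, g3, ← cyc3_inv hab hav hbv] at hconj
      have key : cyc3 a u v = (cyc3 a b u)⁻¹ * (cyc3 a b v)⁻¹ * cyc3 a b u := by
        rw [hconj, cyc3_rot hau hav huv]
      rw [key]
      exact G.mul_mem (G.mul_mem (G.inv_mem (H u hua hub)) (G.inv_mem (H v hva hvb)))
        (H u hua hub)
  rw [← Equiv.Perm.closure_three_cycles_eq_alternating, Subgroup.closure_le]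
  rintro σ hσ
  obtain ⟨x, y, z, hxy, hxz, hyz, rfl⟩ := IsThreeCycle.eq_cyc3 hσ
  show cyc3 x y z ∈ G
  rcases eq_or_ne a x with rfl | hax
  · exact H1 y z hyz hxy.symm hxz.symm
  rcases eq_or_ne a y with rfl | hay
  · rw [cyc3_rot hxy hxz hyz]
    exact H1 z x hxz.symm hyz.symm hxy
  rcases eq_or_ne a z with rfl | haz
  · have : cyc3 a x y = cyc3 x y a := cyc3_rot hxz.symm hyz.symm hxy
    rw [← this]
    exact H1 x y hxy hxz hyz
  · rw [← cyc3_split hax hay haz hxy hxz hyz]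
    exact G.mul_mem (H1 x y hxy hax.symm hay.symm) (H1 y z hyz hay.symm haz.symm)

end Generation

section Blocks

variable {a b ℓ : ℕ}

/-- A permutation of `Fin ℓ` acting on two blocks. -/
def bp (e : Fin a ⊕ Fin b ≃ Fin ℓ) (σ : Equiv.Perm (Fin a)) (τ : Equiv.Perm (Fin b)) :
    Equiv.Perm (Fin ℓ) :=
  e.permCongr (Equiv.sumCongr σ τ)

lemma bp_apply_inl (e : Fin a ⊕ Fin b ≃ Fin ℓ) (σ : Equiv.Perm (Fin a))
    (τ : Equiv.Perm (Fin b)) (i : Fin a) :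
    bp e σ τ (e (Sum.inl i)) = e (Sum.inl (σ i)) := by
  simp [bp, Equiv.permCongr_apply]

lemma bp_apply_inr (e : Fin a ⊕ Fin b ≃ Fin ℓ) (σ : Equiv.Perm (Fin a))
    (τ : Equiv.Perm (Fin b)) (j : Fin b) :
    bp e σ τ (e (Sum.inr j)) = e (Sum.inr (τ j)) := by
  simp [bp, Equiv.permCongr_apply]

lemma bp_mul (e : Fin a ⊕ Fin b ≃ Fin ℓ) (σ σ' : Equiv.Perm (Fin a))
    (τ τ' : Equiv.Perm (Fin b)) :
    bp e σ τ * bp e σ' τ' = bp e (σ * σ') (τ * τ') := by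
  ext v
  simp only [bp, Equiv.permCongr_apply, Equiv.Perm.mul_apply, Equiv.symm_apply_apply]
  rcases e.symm v with i | j <;> simp

lemma bp_pow (e : Fin a ⊕ Fin b ≃ Fin ℓ) (σ : Equiv.Perm (Fin a)) (τ : Equiv.Perm (Fin b))
    (k : ℕ) : (bp e σ τ) ^ k = bp e (σ ^ k) (τ ^ k) := by
  induction k with
  | zero =>
    rw [pow_zero, pow_zero, pow_zero]
    refine Equiv.ext fun v => ?_
    simp only [bp, Equiv.permCongr_apply, Equiv.Perm.one_apply]
    have h : Equiv.sumCongr (1 : Equiv.Perm (Fin a)) (1 : Equiv.Perm (Fin b)) (e.symm v)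
        = e.symm v := by
      rcases e.symm v with i | j <;> simp
    rw [h, Equiv.apply_symm_apply]
  | succ n ih => rw [pow_succ, pow_succ, pow_succ, ih, bp_mul]

end Blocks

section Rotate

lemma finRotate_pow_val {n k : ℕ} (i : Fin n) :
    (((finRotate n) ^ k) i).val = (i.val + k) % n := by
  match n, i with
  | n+1, i =>
    induction k with
    | zero => simp [Nat.mod_eq_of_lt i.isLt]
    | succ m ih =>
      rw [pow_succ', Equiv.Perm.mul_apply, finRotate_succ_apply, Fin.val_add, ih, Fin.val_one',
        ← Nat.add_mod, Nat.add_assoc]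

lemma finRotate_inv_val {n : ℕ} (i : Fin n) :
    (((finRotate n)⁻¹) i).val = (i.val + (n - 1)) % n := by
  match n, i with
  | n+1, i =>
    have hlt : (i.val + n) % (n+1) < n + 1 := Nat.mod_lt _ (Nat.succ_pos n)
    have h : (finRotate (n+1)) ⟨(i.val + n) % (n+1), hlt⟩ = i := by
      apply Fin.ext
      rw [finRotate_succ_apply, Fin.val_add, Fin.val_one', ← Nat.add_mod]
      have : i.val + n + 1 = i.val + (n + 1) := by omega
      rw [this, Nat.add_mod_right, Nat.mod_eq_of_lt i.isLt]
    have h2 : ((finRotate (n+1))⁻¹) i = ⟨(i.val + n) % (n+1), hlt⟩ := by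
      rw [Equiv.Perm.inv_eq_iff_eq]
      exact h.symm
    rw [h2]
    simp

lemma finRotate_trans {n : ℕ} (i j : Fin n) : ∃ k : ℕ, ((finRotate n) ^ k) i = j := by
  refine ⟨j.val + n - i.val, Fin.ext ?_⟩
  rw [finRotate_pow_val]
  match n, i, j with
  | n+1, i, j =>
    have : i.val + (j.val + (n+1) - i.val) = j.val + (n+1) := by omega
    rw [this, Nat.add_mod_right, Nat.mod_eq_of_lt j.isLt]

lemma finRotate_inv_trans {n : ℕ} (i j : Fin n) : ∃ k : ℕ, (((finRotate n)⁻¹) ^ k) i = j := by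
  obtain ⟨k, hk⟩ := finRotate_trans j i
  refine ⟨k, ?_⟩
  rw [inv_pow, ← hk, Equiv.Perm.inv_eq_iff_eq]

end Rotate

lemma zmod_val_inj {n : ℕ} [NeZero n] {z w : ZMod n} (h : z.val = w.val) : z = w := by
  have hz := ZMod.natCast_rightInverse z
  have hw := ZMod.natCast_rightInverse w
  rw [← hz, ← hw, h]

lemma finRotate_val {n : ℕ} (i : Fin n) : ((finRotate n) i).val = (i.val + 1) % n := by
  have h := finRotate_pow_val (k := 1) i
  rwa [pow_one] at h

section Orbits

open MulAction

lemma HasTwoOrbitsOfSizes.flip {α : Type*} {x : Equiv.Perm α} {p q : ℕ}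
    (h : HasTwoOrbitsOfSizes x p q) : HasTwoOrbitsOfSizes x q p := by
  obtain ⟨ω₁, ω₂, hne, htot, h1, h2⟩ := h
  exact ⟨ω₂, ω₁, hne.symm, fun ω => (htot ω).symm, h2, h1⟩

lemma hasTwoOrbits {a b ℓ : ℕ} (ha : 0 < a) (hb : 0 < b)
    (e : Fin a ⊕ Fin b ≃ Fin ℓ) (σ : Equiv.Perm (Fin a)) (τ : Equiv.Perm (Fin b))
    (hσ : ∀ i j : Fin a, ∃ k : ℕ, (σ ^ k) i = j)
    (hτ : ∀ i j : Fin b, ∃ k : ℕ, (τ ^ k) i = j) :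
    HasTwoOrbitsOfSizes (bp e σ τ) a b := by
  have O1 : orbit (Subgroup.zpowers (bp e σ τ)) (e (Sum.inl ⟨0, ha⟩))
      = Set.range (fun i : Fin a => e (Sum.inl i)) := by
    apply Set.eq_of_subset_of_subset
    · rintro w ⟨g, rfl⟩
      obtain ⟨n, hn⟩ := (mem_powers_iff_mem_zpowers).2 g.2
      refine ⟨(σ ^ n) ⟨0, ha⟩, ?_⟩
      show e (Sum.inl ((σ ^ n) ⟨0, ha⟩)) = (g : Equiv.Perm (Fin ℓ)) (e (Sum.inl ⟨0, ha⟩))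
      rw [← hn]
      show e (Sum.inl ((σ ^ n) ⟨0, ha⟩)) = ((bp e σ τ) ^ n) (e (Sum.inl ⟨0, ha⟩))
      rw [bp_pow, bp_apply_inl]
    · rintro w ⟨i, rfl⟩
      obtain ⟨k, hk⟩ := hσ ⟨0, ha⟩ i
      refine ⟨⟨(bp e σ τ) ^ k, Subgroup.pow_mem _ (Subgroup.mem_zpowers _) k⟩, ?_⟩
      show ((bp e σ τ) ^ k) (e (Sum.inl ⟨0, ha⟩)) = e (Sum.inl i)
      rw [bp_pow, bp_apply_inl, hk]
  have O2 : orbit (Subgroup.zpowers (bp e σ τ)) (e (Sum.inr ⟨0, hb⟩))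
      = Set.range (fun j : Fin b => e (Sum.inr j)) := by
    apply Set.eq_of_subset_of_subset
    · rintro w ⟨g, rfl⟩
      obtain ⟨n, hn⟩ := (mem_powers_iff_mem_zpowers).2 g.2
      refine ⟨(τ ^ n) ⟨0, hb⟩, ?_⟩
      show e (Sum.inr ((τ ^ n) ⟨0, hb⟩)) = (g : Equiv.Perm (Fin ℓ)) (e (Sum.inr ⟨0, hb⟩))
      rw [← hn]
      show e (Sum.inr ((τ ^ n) ⟨0, hb⟩)) = ((bp e σ τ) ^ n) (e (Sum.inr ⟨0, hb⟩))
      rw [bp_pow, bp_apply_inr]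
    · rintro w ⟨j, rfl⟩
      obtain ⟨k, hk⟩ := hτ ⟨0, hb⟩ j
      refine ⟨⟨(bp e σ τ) ^ k, Subgroup.pow_mem _ (Subgroup.mem_zpowers _) k⟩, ?_⟩
      show ((bp e σ τ) ^ k) (e (Sum.inr ⟨0, hb⟩)) = e (Sum.inr j)
      rw [bp_pow, bp_apply_inr, hk]
  refine ⟨Quotient.mk'' (e (Sum.inl ⟨0, ha⟩)), Quotient.mk'' (e (Sum.inr ⟨0, hb⟩)),
    ?_, ?_, ?_, ?_⟩
  · intro h
    have horb := congrArg MulAction.orbitRel.Quotient.orbit h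
    rw [MulAction.orbitRel.Quotient.orbit_mk, MulAction.orbitRel.Quotient.orbit_mk, O1, O2]
      at horb
    have hmem : e (Sum.inr (⟨0, hb⟩ : Fin b)) ∈ Set.range (fun i : Fin a => e (Sum.inl i)) := by
      rw [horb]
      exact ⟨⟨0, hb⟩, rfl⟩
    obtain ⟨i, hi⟩ := hmem
    exact absurd (e.injective hi) (by simp)
  · intro ω
    induction' ω using Quotient.inductionOn' with v
    have hv : v = e (e.symm v) := (e.apply_symm_apply v).symm
    rcases hs : e.symm v with i | j
    · left
      rw [Quotient.eq'']
      show v ∈ orbit _ _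
      rw [O1]
      exact ⟨i, by rw [hv, hs]⟩
    · right
      rw [Quotient.eq'']
      show v ∈ orbit _ _
      rw [O2]
      exact ⟨j, by rw [hv, hs]⟩
  · rw [MulAction.orbitRel.Quotient.orbit_mk, O1]
    have hinj : Function.Injective (fun i : Fin a => e (Sum.inl i)) :=
      fun i j h => Sum.inl_injective (e.injective h)
    rw [Nat.card_range_of_injective hinj]
    simp
  · rw [MulAction.orbitRel.Quotient.orbit_mk, O2]
    have hinj : Function.Injective (fun j : Fin b => e (Sum.inr j)) :=
      fun i j h => Sum.inr_injective (e.injective h)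
    rw [Nat.card_range_of_injective hinj]
    simp

end Orbits

/-- **Lemma 9.2, case I1A.4**: for all `ℓ ≥ 9` and `0 < a < ℓ/2` with `gcd(a,ℓ) = 1`,
there is a product-one triple `x₁·x₂·x₃ = 1` in `Sym(ℓ)` generating a subgroup
containing `Alt(ℓ)`, where `⟨x₁⟩` and `⟨x₂⟩` each have exactly two orbits, of sizes
`a` and `ℓ−a`, and `x₃` is a `3`-cycle. -/
theorem statement14 (ℓ a : ℕ) (hℓ : 9 ≤ ℓ) (ha : 0 < a) (ha' : 2 * a < ℓ)
    (hgcd : Nat.gcd a ℓ = 1) :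
    ∃ x₁ x₂ x₃ : Equiv.Perm (Fin ℓ),
      x₁ * x₂ * x₃ = 1 ∧
      alternatingGroup (Fin ℓ) ≤ Subgroup.closure {x₁, x₂, x₃} ∧
      HasTwoOrbitsOfSizes x₁ a (ℓ - a) ∧
      HasTwoOrbitsOfSizes x₂ a (ℓ - a) ∧
      x₃.cycleType = {3} := by
  obtain ⟨b, hab⟩ : ∃ b, a + b = ℓ := ⟨ℓ - a, by omega⟩
  have hb : 0 < b := by omega
  have haltb : a < b := by omega
  have hco : Nat.Coprime a b := by
    have h1 : Nat.Coprime a (b + a) := by rwa [show b + a = ℓ by omega]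
    exact (Nat.coprime_add_self_right).1 h1
  haveI : NeZero a := ⟨ha.ne'⟩
  haveI : NeZero b := ⟨hb.ne'⟩
  obtain ⟨e₁, he₁⟩ : ∃ e : Fin a ⊕ Fin b ≃ Fin ℓ, e = finSumFinEquiv.trans (finCongr hab) :=
    ⟨_, rfl⟩
  obtain ⟨e₂, he₂⟩ : ∃ e : Fin b ⊕ Fin a ≃ Fin ℓ,
      e = finSumFinEquiv.trans (finCongr (show b + a = ℓ by omega)) := ⟨_, rfl⟩
  obtain ⟨x₁, hx₁⟩ : ∃ x : Equiv.Perm (Fin ℓ), x = bp e₁ (finRotate a) (finRotate b) := ⟨_, rfl⟩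
  obtain ⟨x₂, hx₂⟩ : ∃ x : Equiv.Perm (Fin ℓ), x = bp e₂ (finRotate b)⁻¹ (finRotate a)⁻¹ :=
    ⟨_, rfl⟩
  obtain ⟨x₃, hx₃⟩ : ∃ x : Equiv.Perm (Fin ℓ), x = (x₁ * x₂)⁻¹ := ⟨_, rfl⟩
  -- basic value computations
  have he₁l : ∀ i : Fin a, (e₁ (Sum.inl i)).val = i.val := by intro i; simp [he₁]
  have he₁r : ∀ j : Fin b, (e₁ (Sum.inr j)).val = a + j.val := by intro j; simp [he₁]
  have he₂l : ∀ j : Fin b, (e₂ (Sum.inl j)).val = j.val := by intro j; simp [he₂]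
  have he₂r : ∀ i : Fin a, (e₂ (Sum.inr i)).val = b + i.val := by intro i; simp [he₂]
  have hx1lo : ∀ v : Fin ℓ, v.val < a → (x₁ v).val = (v.val + 1) % a := by
    intro v h
    have hv : v = e₁ (Sum.inl ⟨v.val, h⟩) := Fin.ext (by rw [he₁l])
    conv_lhs => rw [hx₁, hv, bp_apply_inl, he₁l, finRotate_val]
  have hx1hi : ∀ v : Fin ℓ, a ≤ v.val → (x₁ v).val = a + ((v.val - a + 1) % b) := by
    intro v h
    have hvl := v.isLt
    have hvb : v.val - a < b := by omega
    have hv : v = e₁ (Sum.inr ⟨v.val - a, hvb⟩) := Fin.ext (by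
      rw [he₁r]; show v.val = a + (v.val - a); omega)
    conv_lhs => rw [hx₁, hv, bp_apply_inr, he₁r, finRotate_val]
  have hx2lo : ∀ v : Fin ℓ, v.val < b → (x₂ v).val = (v.val + (b - 1)) % b := by
    intro v h
    have hv : v = e₂ (Sum.inl ⟨v.val, h⟩) := Fin.ext (by rw [he₂l])
    conv_lhs => rw [hx₂, hv, bp_apply_inl, he₂l, finRotate_inv_val]
  have hx2hi : ∀ v : Fin ℓ, b ≤ v.val → (x₂ v).val = b + ((v.val - b + (a - 1)) % a) := by
    intro v h
    have hvl := v.isLt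
    have hva : v.val - b < a := by omega
    have hv : v = e₂ (Sum.inr ⟨v.val - b, hva⟩) := Fin.ext (by
      rw [he₂r]; show v.val = b + (v.val - b); omega)
    conv_lhs => rw [hx₂, hv, bp_apply_inr, he₂r, finRotate_inv_val]
  -- special points
  obtain ⟨p0, hp0v⟩ : ∃ p : Fin ℓ, p = (⟨0, by omega⟩ : Fin ℓ) := ⟨_, rfl⟩
  obtain ⟨pa, hpav⟩ : ∃ p : Fin ℓ, p = (⟨a, by omega⟩ : Fin ℓ) := ⟨_, rfl⟩
  obtain ⟨pb, hpbv⟩ : ∃ p : Fin ℓ, p = (⟨b, by omega⟩ : Fin ℓ) := ⟨_, rfl⟩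
  have hp0val : p0.val = 0 := by rw [hp0v]
  have hpaval : pa.val = a := by rw [hpav]
  have hpbval : pb.val = b := by rw [hpbv]
  have hne1 : p0 ≠ pb := Fin.ne_of_val_ne (by omega)
  have hne2 : p0 ≠ pa := Fin.ne_of_val_ne (by omega)
  have hne3 : pb ≠ pa := Fin.ne_of_val_ne (by omega)
  -- the product x₁ * x₂ is an explicit 3-cycle
  have prodEq : x₁ * x₂ = cyc3 p0 pb pa := by
    refine Equiv.ext fun v => ?_
    rw [Equiv.Perm.mul_apply]
    have hvl := v.isLt
    by_cases hv0 : v.val = 0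
    · rw [show v = p0 from Fin.ext (by omega), cyc3_fst hne1 hne2]
      have h2 : (x₂ p0).val = b - 1 := by
        rw [hx2lo p0 (by omega), hp0val, Nat.zero_add, Nat.mod_eq_of_lt (by omega)]
      apply Fin.ext
      rw [hx1hi _ (by omega), h2, hpbval,
        show b - 1 - a + 1 = b - a by omega, Nat.mod_eq_of_lt (by omega)]
      omega
    by_cases hva : v.val = a
    · rw [show v = pa from Fin.ext (by omega), cyc3_thd]
      have h2 : (x₂ pa).val = a - 1 := by
        rw [hx2lo pa (by omega), hpaval, show a + (b - 1) = (a - 1) + b by omega,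
          Nat.add_mod_right, Nat.mod_eq_of_lt (by omega)]
      apply Fin.ext
      rw [hx1lo _ (by omega), h2, hp0val, show a - 1 + 1 = a by omega, Nat.mod_self]
    by_cases hvb : v.val = b
    · rw [show v = pb from Fin.ext (by omega), cyc3_snd hne2 hne3]
      have h2 : (x₂ pb).val = b + (a - 1) := by
        rw [hx2hi pb (by omega), hpbval, show b - b + (a - 1) = a - 1 by omega,
          Nat.mod_eq_of_lt (by omega)]
      apply Fin.ext
      rw [hx1hi _ (by omega), h2, hpaval, show b + (a - 1) - a + 1 = b by omega, Nat.mod_self]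
      omega
    -- generic fixed points
    · rw [cyc3_other (Fin.ne_of_val_ne (by omega)) (Fin.ne_of_val_ne (by omega))
        (Fin.ne_of_val_ne (by omega))]
      rcases Nat.lt_or_ge v.val b with hlt | hge
      · have h2 : (x₂ v).val = v.val - 1 := by
          rw [hx2lo v hlt, show v.val + (b - 1) = (v.val - 1) + b by omega,
            Nat.add_mod_right, Nat.mod_eq_of_lt (by omega)]
        rcases Nat.lt_or_ge v.val a with hlta | hgea
        · apply Fin.ext
          rw [hx1lo _ (by omega), h2, show v.val - 1 + 1 = v.val by omega,
            Nat.mod_eq_of_lt (by omega)]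
        · apply Fin.ext
          rw [hx1hi _ (by omega), h2, show v.val - 1 - a + 1 = v.val - a by omega,
            Nat.mod_eq_of_lt (by omega)]
          omega
      · have h2 : (x₂ v).val = v.val - 1 := by
          rw [hx2hi v hge, show v.val - b + (a - 1) = (v.val - b - 1) + a by omega,
            Nat.add_mod_right, Nat.mod_eq_of_lt (by omega)]
          omega
        apply Fin.ext
        rw [hx1hi _ (by omega), h2, show v.val - 1 - a + 1 = v.val - a by omega,
          Nat.mod_eq_of_lt (by omega)]
        omega
  have x3Eq : x₃ = cyc3 p0 pa pb := by rw [hx₃, prodEq, cyc3_inv hne1 hne2 hne3]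
  have hx3three : Equiv.Perm.IsThreeCycle x₃ := by
    rw [x3Eq]; exact cyc3_isThreeCycle hne2 hne1 hne3.symm
  -- orbit statements
  have horb1 : HasTwoOrbitsOfSizes x₁ a (ℓ - a) := by
    rw [show ℓ - a = b by omega, hx₁]
    exact hasTwoOrbits ha hb e₁ _ _ finRotate_trans finRotate_trans
  have horb2 : HasTwoOrbitsOfSizes x₂ a (ℓ - a) := by
    rw [show ℓ - a = b by omega, hx₂]
    exact (hasTwoOrbits hb ha e₂ _ _ finRotate_inv_trans finRotate_inv_trans).flip
  refine ⟨x₁, x₂, x₃, by rw [hx₃]; exact mul_inv_cancel _, ?_, horb1, horb2, hx3three⟩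
  -- generation
  obtain ⟨G, hG⟩ : ∃ G : Subgroup (Equiv.Perm (Fin ℓ)),
      G = Subgroup.closure {x₁, x₂, x₃} := ⟨_, rfl⟩
  rw [← hG]
  have hx1G : x₁ ∈ G := by rw [hG]; exact Subgroup.subset_closure (by simp)
  have hx3G : x₃ ∈ G := by rw [hG]; exact Subgroup.subset_closure (by simp)
  -- coordinates
  obtain ⟨Pz, hPz⟩ : ∃ P : ZMod a → Fin ℓ,
      P = fun i => e₁ (Sum.inl ⟨i.val, ZMod.val_lt i⟩) := ⟨_, rfl⟩
  obtain ⟨Qz, hQz⟩ : ∃ Q : ZMod b → Fin ℓ,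
      Q = fun z => e₁ (Sum.inr ⟨z.val, ZMod.val_lt z⟩) := ⟨_, rfl⟩
  have hPzval : ∀ i, (Pz i).val = i.val := by intro i; rw [hPz]; exact he₁l _
  have hQzval : ∀ z, (Qz z).val = a + z.val := by intro z; rw [hQz]; exact he₁r _
  have hcasta : ∀ w : ZMod a, ((w.val : ℕ) : ZMod a) = w := fun w => ZMod.natCast_rightInverse w
  have hcastb : ∀ w : ZMod b, ((w.val : ℕ) : ZMod b) = w := fun w => ZMod.natCast_rightInverse w
  have hQzinj : Function.Injective Qz := by
    intro z w h
    have h' := congrArg Fin.val h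
    rw [hQzval, hQzval] at h'
    exact zmod_val_inj (by omega)
  have hp0P : p0 = Pz 0 := Fin.ext (by rw [hPzval, ZMod.val_zero, hp0val])
  have hpaQ : pa = Qz 0 := Fin.ext (by rw [hQzval, ZMod.val_zero, hpaval]; omega)
  obtain ⟨μ, hμ⟩ : ∃ m : ZMod b, m = ((b - a : ℕ) : ZMod b) := ⟨_, rfl⟩
  have hμval : μ.val = b - a := by rw [hμ, ZMod.val_natCast, Nat.mod_eq_of_lt (by omega)]
  have hμne : μ ≠ 0 := by
    intro h
    rw [h, ZMod.val_zero] at hμval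
    omega
  have hpbQ : pb = Qz μ := Fin.ext (by rw [hQzval, hμval, hpbval]; omega)
  have hp0Qz : ∀ z, p0 ≠ Qz z := by
    intro z h
    have := congrArg Fin.val h
    rw [hp0val, hQzval] at this
    omega
  have hp0Pz : ∀ i : ZMod a, i ≠ 0 → p0 ≠ Pz i := by
    intro i hi h
    rw [hp0P] at h
    have hval := congrArg Fin.val h
    rw [hPzval, hPzval, ZMod.val_zero] at hval
    exact hi (zmod_val_inj (by rw [ZMod.val_zero]; omega))
  have hPQne : ∀ (i : ZMod a) (z : ZMod b), Pz i ≠ Qz z := by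
    intro i z h
    have := congrArg Fin.val h
    rw [hPzval, hQzval] at this
    have := ZMod.val_lt i
    omega
  -- power actions of x₁
  have hPowP : ∀ (k : ℕ) (i : ZMod a), (x₁ ^ k) (Pz i) = Pz (i + (k : ZMod a)) := by
    intro k i
    simp only [hx₁, hPz, bp_pow]
    rw [bp_apply_inl]
    refine congrArg e₁ (congrArg Sum.inl (Fin.ext ?_))
    show ((finRotate a ^ k) ⟨i.val, ZMod.val_lt i⟩).val = (i + (k : ZMod a)).val
    rw [finRotate_pow_val, ZMod.val_add, ZMod.val_natCast, Nat.add_mod_mod]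
  have hPowQ : ∀ (k : ℕ) (z : ZMod b), (x₁ ^ k) (Qz z) = Qz (z + (k : ZMod b)) := by
    intro k z
    simp only [hx₁, hQz, bp_pow]
    rw [bp_apply_inr]
    refine congrArg e₁ (congrArg Sum.inr (Fin.ext ?_))
    show ((finRotate b ^ k) ⟨z.val, ZMod.val_lt z⟩).val = (z + (k : ZMod b)).val
    rw [finRotate_pow_val, ZMod.val_add, ZMod.val_natCast, Nat.add_mod_mod]
  -- CRT moves
  have hDact : ∀ s : ℕ, ∃ g, g ∈ G ∧ (∀ i, g (Pz i) = Pz i) ∧ (∀ z, g (Qz z) = Qz (z + (s : ZMod b))) := by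
    intro s
    obtain ⟨k, hk1, hk2⟩ := Nat.chineseRemainder hco 0 s
    refine ⟨x₁ ^ k, Subgroup.pow_mem _ hx1G k, fun i => ?_, fun z => ?_⟩
    · rw [hPowP, (ZMod.natCast_eq_natCast_iff _ _ _).2 hk1, Nat.cast_zero, add_zero]
    · rw [hPowQ, (ZMod.natCast_eq_natCast_iff _ _ _).2 hk2]
  have hCact : ∀ s : ℕ, ∃ g, g ∈ G ∧ (∀ i, g (Pz i) = Pz (i + (s : ZMod a))) ∧ (∀ z, g (Qz z) = Qz z) := by
    intro s
    obtain ⟨k, hk1, hk2⟩ := Nat.chineseRemainder hco s 0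
    refine ⟨x₁ ^ k, Subgroup.pow_mem _ hx1G k, fun i => ?_, fun z => ?_⟩
    · rw [hPowP, (ZMod.natCast_eq_natCast_iff _ _ _).2 hk1]
    · rw [hPowQ, (ZMod.natCast_eq_natCast_iff _ _ _).2 hk2, Nat.cast_zero, add_zero]
  -- the basic 3-cycles
  have hU : ∀ z : ZMod b, cyc3 p0 (Qz z) (Qz (z + μ)) ∈ G := by
    intro z
    obtain ⟨g, hgG, hgP, hgQ⟩ := hDact z.val
    have h3 : x₃ = cyc3 p0 (Qz 0) (Qz μ) := by rw [x3Eq, hpaQ, hpbQ]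
    have hgp0 : g p0 = p0 := by rw [hp0P]; exact hgP 0
    have hconj := cyc3_conj g p0 (Qz 0) (Qz μ)
    rw [hgp0, hgQ 0, hgQ μ, zero_add, hcastb z, show μ + z = z + μ by ring] at hconj
    rw [← hconj, ← h3]
    exact Subgroup.mul_mem _ (Subgroup.mul_mem _ hgG hx3G) (Subgroup.inv_mem _ hgG)
  have hS1 : ∀ (s : ℕ) (z : ZMod b), (s : ZMod b) * μ ≠ 0 →
      cyc3 p0 (Qz z) (Qz (z + (s : ZMod b) * μ)) ∈ G := by
    intro s
    induction s with
    | zero => intro z h; rw [Nat.cast_zero, zero_mul] at h; exact absurd rfl h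
    | succ n ih =>
      intro z h
      have hstep : ((n + 1 : ℕ) : ZMod b) * μ = (n : ZMod b) * μ + μ := by push_cast; ring
      by_cases h0 : (n : ZMod b) * μ = 0
      · rw [hstep, h0, zero_add]
        exact hU z
      · have hT1 := ih z h0
        have hT2 := hU (z + (n : ZMod b) * μ)
        have d1 : Qz z ≠ Qz (z + (n : ZMod b) * μ) := fun hh =>
          h0 (left_eq_add.1 (hQzinj hh))
        have d2 : Qz z ≠ Qz (z + ((n + 1 : ℕ) : ZMod b) * μ) := by
          intro hh
          exact h (left_eq_add.1 (hQzinj hh))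
        have d3 : Qz (z + (n : ZMod b) * μ) ≠ Qz (z + ((n + 1 : ℕ) : ZMod b) * μ) := by
          intro hh
          have := hQzinj hh
          rw [hstep, ← add_assoc] at this
          exact hμne (left_eq_add.1 this)
        have hcomb := cyc3_comb (hp0Qz z) (hp0Qz _) (hp0Qz _) d1 d2 d3
        rw [← hcomb]
        have hT2' : cyc3 p0 (Qz (z + (n : ZMod b) * μ)) (Qz (z + ((n + 1 : ℕ) : ZMod b) * μ)) ∈ G := by
          rw [hstep, ← add_assoc]
          exact hT2
        exact Subgroup.mul_mem _ hT2' hT1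
  obtain ⟨u₀, hu₀⟩ : ∃ u : (ZMod b)ˣ, (u : ZMod b) = μ := by
    refine ⟨-(ZMod.unitOfCoprime a hco), ?_⟩
    rw [Units.val_neg, ZMod.coe_unitOfCoprime]
    have hsum : μ + (a : ZMod b) = 0 := by
      rw [hμ, ← Nat.cast_add, show b - a + a = b by omega, ZMod.natCast_self]
    exact (eq_neg_of_add_eq_zero_left hsum).symm
  have hS1' : ∀ z w : ZMod b, z ≠ w → cyc3 p0 (Qz z) (Qz w) ∈ G := by
    intro z w hzw
    obtain ⟨s, hs⟩ : ∃ s : ℕ, (s : ZMod b) * μ = w - z :=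
      ⟨((w - z) * ((u₀⁻¹ : (ZMod b)ˣ) : ZMod b)).val, by
        rw [hcastb, ← hu₀, mul_assoc, Units.inv_mul, mul_one]⟩
    have hμ0 : (s : ZMod b) * μ ≠ 0 := by rw [hs]; exact sub_ne_zero.2 (Ne.symm hzw)
    have := hS1 s z hμ0
    rwa [hs, show z + (w - z) = w by ring] at this
  have hS2 : ∀ (i : ZMod a) (z w : ZMod b), z ≠ w → cyc3 (Pz i) (Qz z) (Qz w) ∈ G := by
    intro i z w hzw
    obtain ⟨g, hgG, hgP, hgQ⟩ := hCact i.val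
    have hgp0 : g p0 = Pz i := by rw [hp0P, hgP 0, zero_add, hcasta]
    have hconj := cyc3_conj g p0 (Qz z) (Qz w)
    rw [hgp0, hgQ z, hgQ w] at hconj
    rw [← hconj]
    exact Subgroup.mul_mem _ (Subgroup.mul_mem _ hgG (hS1' z w hzw)) (Subgroup.inv_mem _ hgG)
  have h1b : (1 : ZMod b) ≠ 0 := by
    intro hh
    have h1 : (1 : ZMod b) = ((1 : ℕ) : ZMod b) := by push_cast; ring
    have := congrArg ZMod.val hh
    rw [h1, ZMod.val_natCast, Nat.mod_eq_of_lt (by omega), ZMod.val_zero] at this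
    omega
  have hS3 : ∀ (i : ZMod a), i ≠ 0 → ∀ z : ZMod b, cyc3 p0 (Pz i) (Qz z) ∈ G := by
    intro i hi z
    have hzz1 : Qz z ≠ Qz (z + 1) := by
      intro hh
      exact h1b (left_eq_add.1 (hQzinj hh))
    have hid := cyc3_comb' (x := p0) (p := Qz (z + 1)) (q := Qz z) (r := Pz i)
      (hp0Qz _) (hp0Qz _) (hp0Pz i hi) (Ne.symm hzz1) (hPQne i (z + 1)).symm (hPQne i z).symm
    rw [← hid]
    refine Subgroup.mul_mem _ ?_ (hS1' (z + 1) z (fun hh => h1b (left_eq_add.1 hh.symm)))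
    exact hS2 i z (z + 1) (fun hh => h1b (left_eq_add.1 hh))
  have hN1 : ∀ k : Fin ℓ, k ≠ p0 → k ≠ pa → cyc3 p0 pa k ∈ G := by
    intro k hk0 hka
    have hkl := k.isLt
    rcases Nat.lt_or_ge k.val a with hlt | hge
    · obtain ⟨i, hi⟩ : ∃ i : ZMod a, i = ((k.val : ℕ) : ZMod a) := ⟨_, rfl⟩
      have hkP : k = Pz i := Fin.ext (by rw [hPzval, hi, ZMod.val_natCast, Nat.mod_eq_of_lt hlt])
      have hine : i ≠ 0 := by
        intro hh
        exact hk0 (by rw [hkP, hh, ← hp0P])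
      have hmem := hS3 i hine 0
      rw [hkP, hpaQ,
        show cyc3 p0 (Qz 0) (Pz i) = (cyc3 p0 (Pz i) (Qz 0))⁻¹ from
          (cyc3_inv (hp0Pz i hine) (hp0Qz 0) (hPQne i 0)).symm]
      exact Subgroup.inv_mem _ hmem
    · obtain ⟨z, hz⟩ : ∃ z : ZMod b, z = ((k.val - a : ℕ) : ZMod b) := ⟨_, rfl⟩
      have hkQ : k = Qz z := Fin.ext
        (by rw [hQzval, hz, ZMod.val_natCast, Nat.mod_eq_of_lt (by omega)]; omega)
      have hzne : (0 : ZMod b) ≠ z := by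
        intro hh
        exact hka (by rw [hkQ, ← hh, ← hpaQ])
      rw [hkQ, hpaQ]
      exact hS1' 0 z hzne
  exact alt_le_of_cyc3_mem G p0 pa hne2 hN1
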